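/- For all even k ≥ 2, both bounds of the previous inequality are attained: there exist bit-vectors a, b and a', b' such that Δ(a,b) equals the upper bound (1/25)(2^k(10k − 5(−1)^{k/2} − 1) + 5 + (−1)^{k/2}) and Δ(a',b') equals the lower bound −(1/25)(2^k(10k + 5(−1)^{k/2} − 1) − 5 + (−1)^{k/2}). Specifically, for k/2 even the maximizer is a = b = pattern 0110 repeated (b_j set iff j ≡ 1,2 mod 4) and the minimizer is a = pattern 1001-repeated against b = pattern 0110-repeated; for k/2 odd the roles use the shifted patterns 100110... and 011001... -/

import Mathlib

/-- Booth encoding function `B(x,y,z) = -2x + y + z`. -/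
def BoothB (x y z : ℤ) : ℤ := -2 * x + y + z

/-- The `i`-th Booth Radix-4 digit of the bit-vector `a` (bits indexed by `ℤ`,
with the convention that `a (-1) = 0` is imposed as a hypothesis). -/
def BoothDig (a : ℤ → ℤ) (i : ℕ) : ℤ :=
  BoothB (a (2 * (i : ℤ) + 1)) (a (2 * (i : ℤ))) (a (2 * (i : ℤ) - 1))

/-- The truncation error `Δ(a,b)` of a double Booth Radix-4 partial product array:
the sum of `4^(i+j) · B(a_{2i+1},a_{2i},a_{2i-1}) · B(b_{2j+1},b_{2j},b_{2j-1})`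
over all `i, j ≥ 0` with `i + j < k/2`. -/
def Delta (k : ℕ) (a b : ℤ → ℤ) : ℤ :=
  ∑ p ∈ (Finset.range (k / 2) ×ˢ Finset.range (k / 2)).filter
      (fun p => p.1 + p.2 < k / 2),
    4 ^ (p.1 + p.2) * BoothDig a p.1 * BoothDig b p.2

/- Auxiliary definitions -/

def paFn : ℤ → ℤ := fun j => if 0 ≤ j ∧ (j % 4 = 1 ∨ j % 4 = 2) then 1 else 0
def qaFn : ℤ → ℤ := fun j => if 0 ≤ j ∧ (j % 4 = 0 ∨ j % 4 = 3) then 1 else 0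

def DSum (m : ℕ) (a b : ℤ → ℤ) : ℤ :=
  ∑ p ∈ (Finset.range m ×ˢ Finset.range m).filter
      (fun p => p.1 + p.2 < m),
    4 ^ (p.1 + p.2) * BoothDig a p.1 * BoothDig b p.2

lemma paFn_bit (i : ℤ) : paFn i = 0 ∨ paFn i = 1 := by
  unfold paFn; split_ifs <;> simp

lemma qaFn_bit (i : ℤ) : qaFn i = 0 ∨ qaFn i = 1 := by
  unfold qaFn; split_ifs <;> simp

lemma paFn_neg : paFn (-1) = 0 := by unfold paFn; split_ifs with h <;> omega
lemma qaFn_neg : qaFn (-1) = 0 := by unfold qaFn; split_ifs with h <;> omega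

lemma dig_pa (i : ℕ) : BoothDig paFn i = 2 * (-1) ^ (i + 1) := by
  rcases Nat.even_or_odd i with ⟨t, rfl⟩ | ⟨t, rfl⟩
  · have h1 : ((-1 : ℤ)) ^ (t + t + 1) = -1 := Odd.neg_one_pow ⟨t, by ring⟩
    rw [h1]
    unfold BoothDig BoothB paFn
    push_cast
    split_ifs <;> omega
  · have h1 : ((-1 : ℤ)) ^ (2 * t + 1 + 1) = 1 := Even.neg_one_pow ⟨t + 1, by ring⟩
    rw [h1]
    unfold BoothDig BoothB paFn
    push_cast
    split_ifs <;> omega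

lemma dig_qa (i : ℕ) : BoothDig qaFn i = if i = 0 then 1 else 2 * (-1) ^ i := by
  rcases Nat.eq_zero_or_pos i with rfl | hi
  · simp only [if_pos rfl]
    unfold BoothDig BoothB qaFn
    norm_num
  · rw [if_neg (by omega)]
    rcases Nat.even_or_odd i with ⟨t, rfl⟩ | ⟨t, rfl⟩
    · have h1 : ((-1 : ℤ)) ^ (t + t) = 1 := Even.neg_one_pow ⟨t, rfl⟩
      rw [h1]
      unfold BoothDig BoothB qaFn
      push_cast
      split_ifs <;> omega
    · have h1 : ((-1 : ℤ)) ^ (2 * t + 1) = -1 := Odd.neg_one_pow ⟨t, rfl⟩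
      rw [h1]
      unfold BoothDig BoothB qaFn
      push_cast
      split_ifs <;> omega

lemma filter_succ (m : ℕ) :
    (Finset.range (m+1) ×ˢ Finset.range (m+1)).filter (fun p => p.1 + p.2 < m+1)
    = ((Finset.range m ×ˢ Finset.range m).filter (fun p => p.1 + p.2 < m))
      ∪ Finset.HasAntidiagonal.antidiagonal m := by
  ext ⟨i, j⟩
  simp only [Finset.mem_filter, Finset.mem_product, Finset.mem_range,
    Finset.mem_union, Finset.HasAntidiagonal.mem_antidiagonal]
  omega

lemma DSum_succ (m : ℕ) (a b : ℤ → ℤ) :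
    DSum (m+1) a b = DSum m a b
      + 4 ^ m * ∑ p ∈ Finset.HasAntidiagonal.antidiagonal m, BoothDig a p.1 * BoothDig b p.2 := by
  unfold DSum
  rw [filter_succ, Finset.sum_union]
  · congr 1
    rw [Finset.mul_sum]
    refine Finset.sum_congr rfl fun p hp => ?_
    rw [Finset.HasAntidiagonal.mem_antidiagonal] at hp
    rw [hp, mul_assoc]
  · rw [Finset.disjoint_left]
    intro ⟨i, j⟩ hp hq
    simp only [Finset.mem_filter, Finset.mem_product, Finset.mem_range] at hp
    rw [Finset.HasAntidiagonal.mem_antidiagonal] at hq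
    omega

lemma anti_pp (m : ℕ) :
    ∑ p ∈ Finset.HasAntidiagonal.antidiagonal m, BoothDig paFn p.1 * BoothDig paFn p.2
      = 4 * (m + 1) * (-1) ^ m := by
  rw [Finset.Nat.sum_antidiagonal_eq_sum_range_succ_mk]
  have : ∀ x ∈ Finset.range (m+1),
      BoothDig paFn x * BoothDig paFn (m - x) = 4 * (-1) ^ m := by
    intro x hx
    rw [Finset.mem_range] at hx
    rw [dig_pa, dig_pa]
    have hxm : (x + 1) + (m - x + 1) = m + 2 := by omega
    calc 2 * (-1:ℤ) ^ (x+1) * (2 * (-1) ^ (m - x + 1))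
        = 4 * (-1) ^ ((x+1) + (m-x+1)) := by ring
      _ = 4 * (-1) ^ (m + 2) := by rw [hxm]
      _ = 4 * (-1) ^ m := by rw [pow_add]; ring
  rw [Finset.sum_congr rfl this, Finset.sum_const, Finset.card_range]
  skip; ring

lemma anti_qp (m : ℕ) :
    ∑ p ∈ Finset.HasAntidiagonal.antidiagonal m, BoothDig qaFn p.1 * BoothDig paFn p.2
      = (4 * m + 2) * (-1) ^ (m + 1) := by
  rw [Finset.Nat.sum_antidiagonal_eq_sum_range_succ_mk]
  rw [Finset.sum_range_succ']
  have h0 : BoothDig qaFn 0 * BoothDig paFn (m - 0) = 2 * (-1) ^ (m + 1) := by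
    rw [dig_qa, dig_pa]; simp
  have h1 : ∀ x ∈ Finset.range m,
      BoothDig qaFn (x+1) * BoothDig paFn (m - (x+1)) = 4 * (-1) ^ (m+1) := by
    intro x hx
    rw [Finset.mem_range] at hx
    rw [dig_qa, dig_pa, if_neg (by omega)]
    have hxm : (x + 1) + (m - (x+1) + 1) = m + 1 := by omega
    calc 2 * (-1:ℤ) ^ (x+1) * (2 * (-1) ^ (m - (x+1) + 1))
        = 4 * (-1) ^ ((x+1) + (m-(x+1)+1)) := by ring
      _ = 4 * (-1) ^ (m + 1) := by rw [hxm]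
  rw [Finset.sum_congr rfl h1, Finset.sum_const, Finset.card_range, h0]
  skip; ring

lemma dsum_pp (m : ℕ) :
    25 * DSum m paFn paFn = 4 - (20 * m + 4) * (-4) ^ m := by
  induction m with
  | zero => simp [DSum]
  | succ m ih =>
      rw [DSum_succ, anti_pp]
      have h4 : ((-4 : ℤ)) ^ m = (-1) ^ m * 4 ^ m := by
        rw [neg_pow]
      rw [mul_add, ih]
      rw [pow_succ, h4]
      push_cast
      ring

lemma dsum_qp (m : ℕ) :
    25 * DSum m qaFn paFn = (20 * m - 6) * (-4) ^ m + 6 := by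
  induction m with
  | zero => simp [DSum]
  | succ m ih =>
      rw [DSum_succ, anti_qp]
      have h4 : ((-4 : ℤ)) ^ m = (-1) ^ m * 4 ^ m := by
        rw [neg_pow]
      rw [mul_add, ih]
      rw [pow_succ, pow_succ, h4]
      push_cast
      ring

lemma delta_eq_dsum (k : ℕ) (a b : ℤ → ℤ) : Delta k a b = DSum (k / 2) a b := rfl

/-- Both bounds on the double Booth Radix-4 truncation error are attained: there
exist bit-vectors `a, b` achieving the upper bound and `a', b'` achieving the
lower bound. -/
theorem delta_bounds_attained (k : ℕ) (hk : Even k) (hk2 : 2 ≤ k) :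
    ∃ a b a' b' : ℤ → ℤ,
      (∀ i : ℤ, a i = 0 ∨ a i = 1) ∧ (∀ i : ℤ, b i = 0 ∨ b i = 1) ∧
      (∀ i : ℤ, a' i = 0 ∨ a' i = 1) ∧ (∀ i : ℤ, b' i = 0 ∨ b' i = 1) ∧
      a (-1) = 0 ∧ b (-1) = 0 ∧ a' (-1) = 0 ∧ b' (-1) = 0 ∧
      (Delta k a b : ℚ) =
        (1 / 25 : ℚ) * (2 ^ k * (10 * (k : ℚ) - 5 * (-1) ^ (k / 2) - 1)
          + 5 + (-1) ^ (k / 2)) ∧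
      (Delta k a' b' : ℚ) =
        -(1 / 25 : ℚ) * (2 ^ k * (10 * (k : ℚ) + 5 * (-1) ^ (k / 2) - 1)
          - 5 + (-1) ^ (k / 2)) := by
  obtain ⟨m, hm⟩ := hk
  have hkm : k / 2 = m := by omega
  have hpow : (2 : ℚ) ^ k = 4 ^ m := by
    have : k = 2 * m := by omega
    rw [this, pow_mul]; norm_num
  have hpp : (25 : ℚ) * (DSum m paFn paFn : ℤ) = 4 - (20 * m + 4) * (-4) ^ m := by
    exact_mod_cast congrArg (Int.cast : ℤ → ℚ) (dsum_pp m)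
  have hqp : (25 : ℚ) * (DSum m qaFn paFn : ℤ) = (20 * m - 6) * (-4) ^ m + 6 := by
    exact_mod_cast congrArg (Int.cast : ℤ → ℚ) (dsum_qp m)
  have h4m : ((-4 : ℚ)) ^ m = (-1) ^ m * 4 ^ m := by rw [neg_pow]
  rcases Nat.even_or_odd m with he | ho
  · have h1 : ((-1 : ℚ)) ^ m = 1 := he.neg_one_pow
    refine ⟨qaFn, paFn, paFn, paFn, qaFn_bit, paFn_bit, paFn_bit, paFn_bit,
      qaFn_neg, paFn_neg, paFn_neg, paFn_neg, ?_, ?_⟩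
    · rw [delta_eq_dsum, hkm, hpow, h1]
      rw [h4m, h1] at hqp
      have hk' : (k : ℚ) = 2 * m := by exact_mod_cast (by omega : k = 2 * m)
      rw [hk']
      linear_combination (1/25 : ℚ) * hqp
    · rw [delta_eq_dsum, hkm, hpow, h1]
      rw [h4m, h1] at hpp
      have hk' : (k : ℚ) = 2 * m := by exact_mod_cast (by omega : k = 2 * m)
      rw [hk']
      linear_combination (1/25 : ℚ) * hpp
  · have h1 : ((-1 : ℚ)) ^ m = -1 := ho.neg_one_pow
    refine ⟨paFn, paFn, qaFn, paFn, paFn_bit, paFn_bit, qaFn_bit, paFn_bit,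
      paFn_neg, paFn_neg, qaFn_neg, paFn_neg, ?_, ?_⟩
    · rw [delta_eq_dsum, hkm, hpow, h1]
      rw [h4m, h1] at hpp
      have hk' : (k : ℚ) = 2 * m := by exact_mod_cast (by omega : k = 2 * m)
      rw [hk']
      linear_combination (1/25 : ℚ) * hpp
    · rw [delta_eq_dsum, hkm, hpow, h1]
      rw [h4m, h1] at hqp
      have hk' : (k : ℚ) = 2 * m := by exact_mod_cast (by omega : k = 2 * m)
      rw [hk']
      linear_combination (1/25 : ℚ) * hqp
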